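/- As t → −∞, the rescaled torus curves θ ↦ γ(θ,t)/√(−t) converge uniformly in θ ∈ ℝ to the map θ ↦ √2·(0, …, 0, cos(k_m θ), sin(k_m θ)) ∈ ℝ^{2m}, the multiplicity-k_m parametrization of the circle of radius √2 in the last two coordinates. In other words, the tangent flow of the torus curve at t = −∞ is the multiplicity k_m circle. -/

import Mathlib

open Filter Real Finset Topology

/-- Tangent flow at `-∞`: as `t → -∞`, the rescaled torus curves `θ ↦ γ(θ,t)/√(-t)`
converge uniformly in `θ` to `θ ↦ √2 (0,…,0, cos (k_m θ), sin (k_m θ))`, the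
multiplicity-`k_m` parametrization of the circle of radius `√2` in the last two
coordinates (the pair of coordinates with index `jmax`). -/
theorem torus_curve_tangent_flow_at_minus_infty (m : ℕ) (hm : 1 ≤ m) (k : Fin m → ℕ)
    (hkpos : ∀ j, 0 < k j) (hkmono : StrictMono k)
    (r : ℝ → ℝ)
    (hr : ∀ t < (0:ℝ), 0 < r t ∧ ∑ j : Fin m, (r t) ^ (2 * (k j) ^ 2) = -2 * t)
    (γ : ℝ → ℝ → EuclideanSpace ℝ (Fin m × Fin 2))
    (hγ : ∀ (θ t : ℝ) (j : Fin m),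
      γ θ t (j, 0) = (r t) ^ ((k j) ^ 2) * Real.cos (k j * θ) ∧
      γ θ t (j, 1) = (r t) ^ ((k j) ^ 2) * Real.sin (k j * θ))
    (jmax : Fin m) (hjmax : (jmax : ℕ) = m - 1)
    (L : ℝ → EuclideanSpace ℝ (Fin m × Fin 2))
    (hL : ∀ (θ : ℝ) (j : Fin m),
      (L θ (j, 0) = if j = jmax then Real.sqrt 2 * Real.cos (k jmax * θ) else 0) ∧
      (L θ (j, 1) = if j = jmax then Real.sqrt 2 * Real.sin (k jmax * θ) else 0)) :
    TendstoUniformly (fun t θ => (Real.sqrt (-t))⁻¹ • γ θ t) L Filter.atBot := by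
  have hm0 : (0:ℝ) < m := by exact_mod_cast Nat.lt_of_lt_of_le Nat.zero_lt_one hm
  have hm1 : (1:ℝ) ≤ m := by exact_mod_cast hm
  have hKpos : 0 < k jmax := hkpos jmax
  -- every index is ≤ jmax
  have hle_jmax : ∀ j : Fin m, k j ≤ k jmax := by
    intro j
    refine hkmono.monotone ?_
    have hj : (j : ℕ) ≤ m - 1 := Nat.le_sub_one_of_lt j.isLt
    exact Fin.le_def.mpr (by omega)
  have hexp_lt : ∀ j : Fin m, j ≠ jmax → 2 * (k j) ^ 2 + 2 ≤ 2 * (k jmax) ^ 2 := by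
    intro j hj
    have hjlt : j < jmax := by
      rcases lt_or_eq_of_le (Fin.le_def.mpr (by
        have := Nat.le_sub_one_of_lt j.isLt ; omega : (j:ℕ) ≤ (jmax:ℕ))) with h | h
      · exact h
      · exact absurd (Fin.ext (by exact_mod_cast congrArg Fin.val h)) hj
    have hk : k j < k jmax := hkmono hjlt
    have : (k j)^2 < (k jmax)^2 := Nat.pow_lt_pow_left hk (by norm_num)
    omega
  -- eventually r t ≥ 1
  have hr1 : ∀ t : ℝ, t ≤ -(m:ℝ) → 1 ≤ r t := by
    intro t ht
    have htneg : t < 0 := lt_of_le_of_lt ht (by linarith)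
    obtain ⟨hrpos, hsum⟩ := hr t htneg
    by_contra h
    push_neg at h
    have hlt : ∑ j : Fin m, r t ^ (2 * (k j) ^ 2) < ∑ _j : Fin m, (1:ℝ) := by
      refine Finset.sum_lt_sum_of_nonempty ?_ ?_
      · exact Finset.univ_nonempty_iff.mpr ⟨jmax⟩
      · intro j _
        exact pow_lt_one₀ hrpos.le h (by have := hkpos j; positivity)
    rw [hsum] at hlt
    simp only [Finset.sum_const, Finset.card_univ, Fintype.card_fin, nsmul_eq_mul, mul_one] at hlt
    linarith
  -- single term bound
  have hterm_le : ∀ t : ℝ, t < 0 → ∀ j : Fin m, r t ^ (2 * (k j) ^ 2) ≤ -2 * t := by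
    intro t ht j
    obtain ⟨hrpos, hsum⟩ := hr t ht
    rw [← hsum]
    exact Finset.single_le_sum (f := fun j : Fin m => r t ^ (2 * (k j)^2))
      (fun i _ => by positivity) (Finset.mem_univ j)
  -- lower bound on dominant term
  have hdom : ∀ t : ℝ, t ≤ -(m:ℝ) → -2 * t ≤ m * r t ^ (2 * (k jmax) ^ 2) := by
    intro t ht
    have htneg : t < 0 := lt_of_le_of_lt ht (by linarith)
    obtain ⟨hrpos, hsum⟩ := hr t htneg
    rw [← hsum]
    calc ∑ j : Fin m, r t ^ (2 * (k j) ^ 2)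
        ≤ ∑ _j : Fin m, r t ^ (2 * (k jmax) ^ 2) := by
          refine Finset.sum_le_sum fun j _ => ?_
          exact pow_le_pow_right₀ (hr1 t ht) (by have := hle_jmax j; nlinarith [hle_jmax j])
      _ = m * r t ^ (2 * (k jmax) ^ 2) := by
          simp [Finset.sum_const, Finset.card_univ, nsmul_eq_mul]
  -- r t ^ 2 → ∞
  have hr2 : Tendsto (fun t => r t ^ 2) atBot atTop := by
    rw [tendsto_atTop]
    intro C
    have hev : ∀ᶠ t in atBot, t ≤ min (-(m:ℝ)) (-(m * (max C 1) ^ ((k jmax)^2)) / 2) :=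
      eventually_le_atBot _
    filter_upwards [hev] with t ht
    have ht1 : t ≤ -(m:ℝ) := le_trans ht (min_le_left _ _)
    have ht2 : t ≤ -(m * (max C 1) ^ ((k jmax)^2)) / 2 := le_trans ht (min_le_right _ _)
    have h1 : (m:ℝ) * (max C 1) ^ ((k jmax)^2) ≤ -2 * t := by linarith
    have h2 := hdom t ht1
    have h3 : (max C 1) ^ ((k jmax)^2) ≤ r t ^ (2 * (k jmax)^2) := by
      have := le_trans h1 h2
      nlinarith [this, hm0]
    have h4 : (max C 1) ^ ((k jmax)^2) ≤ (r t ^ 2) ^ ((k jmax)^2) := by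
      rwa [pow_mul] at h3
    have h5 : max C 1 ≤ r t ^ 2 := by
      refine le_of_pow_le_pow_left₀ (pow_ne_zero 2 hKpos.ne') (by positivity) h4
    exact le_trans (le_max_left _ _) h5
  -- off-max terms → 0
  have hg0 : ∀ j : Fin m, j ≠ jmax →
      Tendsto (fun t => r t ^ (2 * (k j) ^ 2) / (-2 * t)) atBot (𝓝 0) := by
    intro j hj
    have hup : Tendsto (fun t => (r t ^ 2)⁻¹) atBot (𝓝 0) := hr2.inv_tendsto_atTop
    refine tendsto_of_tendsto_of_tendsto_of_le_of_le' tendsto_const_nhds hup ?_ ?_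
    · filter_upwards [eventually_le_atBot (-(m:ℝ))] with t ht
      have htneg : t < 0 := lt_of_le_of_lt ht (by linarith)
      have hrpos := (hr t htneg).1
      exact div_nonneg (by positivity) (by linarith)
    · filter_upwards [eventually_le_atBot (-(m:ℝ))] with t ht
      have htneg : t < 0 := lt_of_le_of_lt ht (by linarith)
      have hrpos := (hr t htneg).1
      have hr1' := hr1 t ht
      have hnum : r t ^ (2 * (k j) ^ 2) ≤ r t ^ (2 * (k jmax) ^ 2 - 2) := by
        refine pow_le_pow_right₀ hr1' ?_
        have := hexp_lt j hj; omega
      have hden : r t ^ (2 * (k jmax) ^ 2 - 2) * r t ^ 2 ≤ -2 * t := by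
        rw [← pow_add]
        have : 2 * (k jmax) ^ 2 - 2 + 2 = 2 * (k jmax) ^ 2 := by
          have := hexp_lt j hj; omega
        rw [this]
        exact hterm_le t htneg jmax
      have hpos : (0:ℝ) < r t ^ (2 * (k jmax) ^ 2 - 2) * r t ^ 2 := by positivity
      calc r t ^ (2 * (k j) ^ 2) / (-2 * t)
          ≤ r t ^ (2 * (k jmax) ^ 2 - 2) / (r t ^ (2 * (k jmax) ^ 2 - 2) * r t ^ 2) :=
            div_le_div₀ (by positivity) hnum hpos hden
        _ = (r t ^ 2)⁻¹ := by
            rw [div_mul_cancel_left₀ (by positivity)]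
  -- dominant term → 1
  have hgmax : Tendsto (fun t => r t ^ (2 * (k jmax) ^ 2) / (-2 * t)) atBot (𝓝 1) := by
    have hsum0 : Tendsto (fun t => ∑ j ∈ Finset.univ.erase jmax,
        r t ^ (2 * (k j) ^ 2) / (-2 * t)) atBot (𝓝 0) := by
      have := tendsto_finset_sum (Finset.univ.erase jmax)
        (fun j hj => hg0 j (Finset.ne_of_mem_erase hj))
      simpa using this
    have h1 : Tendsto (fun t => 1 - ∑ j ∈ Finset.univ.erase jmax,
        r t ^ (2 * (k j) ^ 2) / (-2 * t)) atBot (𝓝 1) := by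
      simpa using (tendsto_const_nhds (x := (1:ℝ)) (f := atBot)).sub hsum0
    refine h1.congr' ?_
    filter_upwards [eventually_lt_atBot (0:ℝ)] with t htneg
    obtain ⟨hrpos, hsum⟩ := hr t htneg
    have ht2 : (-2 * t) ≠ 0 := by linarith
    have hfull : ∑ j : Fin m, r t ^ (2 * (k j) ^ 2) / (-2 * t) = 1 := by
      rw [← Finset.sum_div, hsum, div_self ht2]
    rw [← Finset.sum_erase_add _ _ (Finset.mem_univ jmax)] at hfull
    linarith
  -- coordinate factor limits
  have hf : ∀ j : Fin m, Tendsto (fun t => (Real.sqrt (-t))⁻¹ * r t ^ ((k j) ^ 2)) atBot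
      (𝓝 (if j = jmax then Real.sqrt 2 else 0)) := by
    intro j
    have hglim : Tendsto (fun t => 2 * (r t ^ (2 * (k j) ^ 2) / (-2 * t))) atBot
        (𝓝 (2 * (if j = jmax then 1 else 0))) := by
      split_ifs with h
      · subst h; exact tendsto_const_nhds.mul hgmax
      · exact tendsto_const_nhds.mul (hg0 j h)
    have hs : Tendsto (fun t => Real.sqrt (2 * (r t ^ (2 * (k j) ^ 2) / (-2 * t)))) atBot
        (𝓝 (Real.sqrt (2 * (if j = jmax then 1 else 0)))) :=
      (Real.continuous_sqrt.tendsto _).comp hglim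
    have hval : Real.sqrt (2 * (if j = jmax then 1 else 0)) =
        (if j = jmax then Real.sqrt 2 else 0) := by
      split_ifs <;> simp
    rw [hval] at hs
    refine hs.congr' ?_
    filter_upwards [eventually_lt_atBot (0:ℝ)] with t htneg
    have hrpos := (hr t htneg).1
    have htne : t ≠ 0 := ne_of_lt htneg
    have h1 : 2 * (r t ^ (2 * (k j) ^ 2) / (-2 * t)) = r t ^ (2 * (k j) ^ 2) / (-t) := by
      field_simp
    rw [h1, Real.sqrt_div (by positivity), mul_comm 2 ((k j)^2), pow_mul,
      Real.sqrt_sq (by positivity)]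
    rw [div_eq_inv_mul]
  -- conclude uniform convergence
  rw [Metric.tendstoUniformly_iff]
  intro ε hε
  set δ : ℝ := ε / (2 * m) with hδdef
  have hδpos : 0 < δ := by positivity
  have hev : ∀ᶠ t in atBot, ∀ j : Fin m,
      |(Real.sqrt (-t))⁻¹ * r t ^ ((k j) ^ 2) - (if j = jmax then Real.sqrt 2 else 0)| < δ := by
    rw [Filter.eventually_all]
    intro j
    have := (hf j).eventually (Metric.ball_mem_nhds _ hδpos)
    filter_upwards [this] with t ht
    rw [Real.dist_eq] at ht
    exact ht
  filter_upwards [hev, eventually_lt_atBot (0:ℝ)] with t hjs htneg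
  intro θ
  have hbound : ∀ i : Fin m × Fin 2,
      dist (L θ i) (((Real.sqrt (-t))⁻¹ • γ θ t) i) ≤ δ := by
    rintro ⟨j, z⟩
    have hsmul : ∀ i, ((Real.sqrt (-t))⁻¹ • γ θ t) i = (Real.sqrt (-t))⁻¹ * γ θ t i :=
      fun i => rfl
    have hkj : j = jmax → (k jmax : ℝ) = (k j : ℝ) := by rintro rfl; rfl
    fin_cases z
    · show |L θ (j, 0) - (Real.sqrt (-t))⁻¹ * γ θ t (j, 0)| ≤ δ
      rw [(hγ θ t j).1, (hL θ j).1]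
      have hLval : (if j = jmax then Real.sqrt 2 * Real.cos (↑(k jmax) * θ) else 0) =
          (if j = jmax then Real.sqrt 2 else 0) * Real.cos (↑(k j) * θ) := by
        split_ifs with h
        · rw [hkj h]
        · rw [zero_mul]
      rw [hLval, ← mul_assoc, ← sub_mul, abs_mul]
      calc |(if j = jmax then Real.sqrt 2 else 0) - (Real.sqrt (-t))⁻¹ * r t ^ ((k j)^2)|
            * |Real.cos (↑(k j) * θ)|
          ≤ |(if j = jmax then Real.sqrt 2 else 0) - (Real.sqrt (-t))⁻¹ * r t ^ ((k j)^2)| * 1 :=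
            mul_le_mul_of_nonneg_left (Real.abs_cos_le_one _) (abs_nonneg _)
        _ ≤ δ := by rw [mul_one, abs_sub_comm]; exact (hjs j).le
    · show |L θ (j, 1) - (Real.sqrt (-t))⁻¹ * γ θ t (j, 1)| ≤ δ
      rw [(hγ θ t j).2, (hL θ j).2]
      have hLval : (if j = jmax then Real.sqrt 2 * Real.sin (↑(k jmax) * θ) else 0) =
          (if j = jmax then Real.sqrt 2 else 0) * Real.sin (↑(k j) * θ) := by
        split_ifs with h
        · rw [hkj h]
        · rw [zero_mul]
      rw [hLval, ← mul_assoc, ← sub_mul, abs_mul]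
      calc |(if j = jmax then Real.sqrt 2 else 0) - (Real.sqrt (-t))⁻¹ * r t ^ ((k j)^2)|
            * |Real.sin (↑(k j) * θ)|
          ≤ |(if j = jmax then Real.sqrt 2 else 0) - (Real.sqrt (-t))⁻¹ * r t ^ ((k j)^2)| * 1 :=
            mul_le_mul_of_nonneg_left (Real.abs_sin_le_one _) (abs_nonneg _)
        _ ≤ δ := by rw [mul_one, abs_sub_comm]; exact (hjs j).le
  rw [EuclideanSpace.dist_eq]
  have hsumle : ∑ i : Fin m × Fin 2,
      dist (L θ i) (((Real.sqrt (-t))⁻¹ • γ θ t) i) ^ 2 ≤ (2 * m) * δ ^ 2 := by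
    calc ∑ i : Fin m × Fin 2, dist (L θ i) (((Real.sqrt (-t))⁻¹ • γ θ t) i) ^ 2
        ≤ ∑ _i : Fin m × Fin 2, δ ^ 2 := by
          refine Finset.sum_le_sum fun i _ => ?_
          exact pow_le_pow_left₀ dist_nonneg (hbound i) 2
      _ = (2 * m) * δ ^ 2 := by
          simp [Finset.sum_const, Finset.card_univ, nsmul_eq_mul, mul_comm]
  have h1 : Real.sqrt (∑ i : Fin m × Fin 2,
      dist (L θ i) (((Real.sqrt (-t))⁻¹ • γ θ t) i) ^ 2) ≤
      Real.sqrt ((2 * m) * δ ^ 2) := Real.sqrt_le_sqrt hsumle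
  refine lt_of_le_of_lt h1 ?_
  rw [Real.sqrt_mul (by positivity), Real.sqrt_sq hδpos.le]
  have hlt : Real.sqrt (2 * m) < 2 * m := (Real.sqrt_lt' (by positivity)).mpr (by nlinarith [hm1])
  calc Real.sqrt (2 * m) * δ < (2 * m) * δ := by
        exact mul_lt_mul_of_pos_right hlt hδpos
    _ = ε := by
        rw [hδdef]; field_simp
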